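/- In a discrete structural equation model, let π be a topological order of G, m ∈ [d], and j ∈ π[1:m] := {π(1),…,π(m)}. Let Des_j^{π[1:m]} denote the indices in π[1:m] that are descendants of j, and W_j^{π[1:m]} the indices in π[1:m] other than j that are not descendants of j. Then H(V_j | (V_l)_{l∈π[1:m], l≠j}) = H(ε_j) − I(V_j ; (V_l)_{l∈Des_j^{π[1:m]}} | (V_l)_{l∈W_j^{π[1:m]}}). In particular, if j is a sink of the induced subgraph G^{π[1:m]}, then H(V_j | (V_l)_{l∈π[1:m], l≠j}) = H(ε_j). -/

import Mathlib

open MeasureTheory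

attribute [local instance] Classical.propDecidable

/-- Shannon entropy of a finite-valued random variable. -/
noncomputable def entropy {Ω : Type*} [MeasurableSpace Ω] (P : Measure Ω)
    {T : Type*} [Fintype T] (X : Ω → T) : ℝ :=
  ∑ x : T, Real.negMulLog ((P (X ⁻¹' {x})).toReal)

/-- Conditional entropy H(Y|X) := H(X,Y) − H(X). -/
noncomputable def condEntropy {Ω : Type*} [MeasurableSpace Ω] (P : Measure Ω)
    {S T : Type*} [Fintype S] [Fintype T] (X : Ω → S) (Y : Ω → T) : ℝ :=
  entropy P (fun ω => (X ω, Y ω)) - entropy P X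

/-- Conditional mutual information I(Y;Z|X) := H(Y|X) − H(Y|X,Z). -/
noncomputable def condMutualInfo {Ω : Type*} [MeasurableSpace Ω] (P : Measure Ω)
    {S T U : Type*} [Fintype S] [Fintype T] [Fintype U]
    (X : Ω → S) (Y : Ω → T) (Z : Ω → U) : ℝ :=
  condEntropy P X Y - condEntropy P (fun ω => (X ω, Z ω)) Y

lemma entropy_comp_inj {Ω : Type*} [MeasurableSpace Ω] (P : Measure Ω)
    {S T : Type*} [Fintype S] [Fintype T] (X : Ω → S) (Y : Ω → T)
    (g : S → T) (hg : Function.Injective g) (hXY : ∀ ω, Y ω = g (X ω)) :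
    entropy P Y = entropy P X := by
  classical
  unfold entropy
  rw [← Finset.sum_subset (Finset.subset_univ (Finset.univ.image g))]
  · rw [Finset.sum_image (fun a _ b _ h => hg h)]
    refine Finset.sum_congr rfl fun s _ => ?_
    have : Y ⁻¹' {g s} = X ⁻¹' {s} := by
      ext ω; simp [hXY ω, hg.eq_iff]
    rw [this]
  · intro t _ ht
    have : Y ⁻¹' {t} = ∅ := by
      ext ω
      simp only [Set.mem_preimage, Set.mem_singleton_iff, hXY ω, Set.mem_empty_iff_false,
        iff_false]
      rintro rfl
      exact ht (Finset.mem_image_of_mem g (Finset.mem_univ _))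
    simp [this]

lemma sum_preimage_toReal_eq_one {Ω : Type*} [MeasurableSpace Ω] (P : Measure Ω)
    [IsProbabilityMeasure P] {U : Type*} [Fintype U] [MeasurableSpace U]
    [MeasurableSingletonClass U] (Z : Ω → U) (hZ : Measurable Z) :
    ∑ u : U, ((P (Z ⁻¹' {u})).toReal) = 1 := by
  have h1 : ∑ u : U, P (Z ⁻¹' {u}) = 1 := by
    rw [sum_measure_preimage_singleton _ (fun y _ => hZ (measurableSet_singleton y))]
    simp
  have h2 := congrArg ENNReal.toReal h1
  rwa [ENNReal.toReal_sum (fun a _ => measure_ne_top P _), ENNReal.toReal_one] at h2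

lemma entropy_pair_of_indepFun {Ω : Type*} [MeasurableSpace Ω] (P : Measure Ω)
    [IsProbabilityMeasure P] {S T : Type*} [Fintype S] [Fintype T]
    [MeasurableSpace S] [MeasurableSingletonClass S]
    [MeasurableSpace T] [MeasurableSingletonClass T]
    (X : Ω → S) (Y : Ω → T) (hX : Measurable X) (hY : Measurable Y)
    (h : ProbabilityTheory.IndepFun X Y P) :
    entropy P (fun ω => (X ω, Y ω)) = entropy P X + entropy P Y := by
  unfold entropy
  rw [Fintype.sum_prod_type]
  have key : ∀ (s : S) (t : T), ((P ((fun ω => (X ω, Y ω)) ⁻¹' {(s, t)})).toReal)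
      = (P (X ⁻¹' {s})).toReal * (P (Y ⁻¹' {t})).toReal := by
    intro s t
    have hpre : (fun ω => (X ω, Y ω)) ⁻¹' {(s, t)} = X ⁻¹' {s} ∩ Y ⁻¹' {t} := by
      ext ω; simp [Prod.ext_iff]
    rw [hpre, h.measure_inter_preimage_eq_mul _ _ (measurableSet_singleton s)
      (measurableSet_singleton t), ENNReal.toReal_mul]
  have e1 : ∀ s : S, ∑ t : T, Real.negMulLog ((P ((fun ω => (X ω, Y ω)) ⁻¹' {(s, t)})).toReal)
      = Real.negMulLog ((P (X ⁻¹' {s})).toReal)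
        + (P (X ⁻¹' {s})).toReal * ∑ t : T, Real.negMulLog ((P (Y ⁻¹' {t})).toReal) := by
    intro s
    have : ∀ t : T, Real.negMulLog ((P ((fun ω => (X ω, Y ω)) ⁻¹' {(s, t)})).toReal)
        = (P (Y ⁻¹' {t})).toReal * Real.negMulLog ((P (X ⁻¹' {s})).toReal)
          + (P (X ⁻¹' {s})).toReal * Real.negMulLog ((P (Y ⁻¹' {t})).toReal) := by
      intro t; rw [key s t, Real.negMulLog_mul]
    rw [Finset.sum_congr rfl (fun t _ => this t), Finset.sum_add_distrib,
      ← Finset.sum_mul, ← Finset.mul_sum, sum_preimage_toReal_eq_one P Y hY, one_mul]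
  rw [Finset.sum_congr rfl (fun s _ => e1 s), Finset.sum_add_distrib, ← Finset.sum_mul,
    sum_preimage_toReal_eq_one P X hX, one_mul]


/-- For a topological order `π` of `G`, `m`, and `j ∈ π[1:m]`:
`H(V_j | (V_l)_{l ∈ π[1:m], l ≠ j}) = H(ε_j) − I(V_j ; Des | W)`, where `Des`
are the descendants of `j` inside `π[1:m]` and `W` the other non-descendants;
in particular if `j` is a sink of the induced subgraph `G^{π[1:m]}` then
`H(V_j | (V_l)_{l ∈ π[1:m], l ≠ j}) = H(ε_j)`. -/
theorem stmt10 {d : ℕ} (E : Fin d → Fin d → Prop)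
    (hacyc : ∀ i, ¬ Relation.TransGen E i i)
    {Ω A : Type*} [MeasurableSpace Ω] (P : Measure Ω) [IsProbabilityMeasure P]
    [Fintype A] [AddCommGroup A] [MeasurableSpace A] [MeasurableSingletonClass A]
    (ε : Fin d → Ω → A) (hεmeas : ∀ i, Measurable (ε i))
    (hindep : ProbabilityTheory.iIndepFun ε P)
    (f : (i : Fin d) → ({j : Fin d // E j i} → A) → A)
    (V : Fin d → Ω → A) (hVmeas : ∀ i, Measurable (V i))
    (hV : ∀ i ω, V i ω = f i (fun j => V j.1 ω) + ε i ω)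
    (π : Equiv.Perm (Fin d))
    (hπ : ∀ a b, Relation.TransGen E a b → π.symm a < π.symm b)
    (m : Fin d) (j : Fin d) (hj : π.symm j ≤ m) :
    (condEntropy P (fun ω => fun l : {l : Fin d // π.symm l ≤ m ∧ l ≠ j} => V l.1 ω) (V j)
        = entropy P (ε j)
          - condMutualInfo P
              (fun ω =>
                fun l : {l : Fin d // (π.symm l ≤ m ∧ l ≠ j) ∧ ¬ Relation.TransGen E j l} =>
                  V l.1 ω)
              (V j)
              (fun ω => fun l : {l : Fin d // π.symm l ≤ m ∧ Relation.TransGen E j l} =>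
                V l.1 ω))
    ∧ ((∀ l, π.symm l ≤ m → ¬ E j l) →
        condEntropy P (fun ω => fun l : {l : Fin d // π.symm l ≤ m ∧ l ≠ j} => V l.1 ω) (V j)
          = entropy P (ε j)) := by
  classical
  -- abbreviations for the three subtypes
  let S' := {l : Fin d // π.symm l ≤ m ∧ l ≠ j}
  let W := {l : Fin d // (π.symm l ≤ m ∧ l ≠ j) ∧ ¬ Relation.TransGen E j l}
  let D := {l : Fin d // π.symm l ≤ m ∧ Relation.TransGen E j l}
  -- auxiliary: V l is a function of the noises at non-descendants of j, for such l
  have aux : ∀ n : ℕ, ∀ l : Fin d, (π.symm l : ℕ) < n → ¬ Relation.ReflTransGen E j l →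
      ∃ g : ({k : Fin d // ¬ Relation.ReflTransGen E j k} → A) → A,
        ∀ ω, V l ω = g (fun k => ε k.1 ω) := by
    intro n
    induction n with
    | zero => intro l hl; omega
    | succ n ih =>
      intro l hl hnot
      have hpar : ∀ p : {p : Fin d // E p l},
          ∃ g : ({k : Fin d // ¬ Relation.ReflTransGen E j k} → A) → A,
            ∀ ω, V p.1 ω = g (fun k => ε k.1 ω) := by
        intro p
        refine ih p.1 ?_ (fun hr => hnot (hr.tail p.2))
        have h1 : (π.symm p.1 : ℕ) < (π.symm l : ℕ) := hπ p.1 l (Relation.TransGen.single p.2)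
        omega
      choose g hg using hpar
      refine ⟨fun w => f l (fun p => g p w) + w ⟨l, hnot⟩, fun ω => ?_⟩
      rw [hV l ω]
      exact congrArg (· + ε l ω) (congrArg (f l) (funext fun p => hg p ω))
  -- each V l for l ∈ W is a function of the non-descendant noises
  have hWfun : ∀ l : W, ∃ g : ({k : Fin d // ¬ Relation.ReflTransGen E j k} → A) → A,
      ∀ ω, V l.1 ω = g (fun k => ε k.1 ω) := by
    intro l
    refine aux d l.1 (π.symm l.1).isLt ?_
    intro hr
    rcases Relation.reflTransGen_iff_eq_or_transGen.mp hr with h | h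
    · exact l.2.1.2 h
    · exact l.2.2 h
  choose gW hgW using hWfun
  -- independence of (V_l)_{l ∈ W} from ε j
  have hXWmeas : Measurable (fun ω => fun l : W => V l.1 ω) :=
    measurable_pi_lambda _ (fun l => hVmeas l.1)
  have hindepW : ProbabilityTheory.IndepFun (fun ω => fun l : W => V l.1 ω) (ε j) P := by
    have hdisj : Disjoint ({j}ᶜ : Finset (Fin d)) ({j} : Finset (Fin d)) :=
      (disjoint_compl_left (a := ({j} : Finset (Fin d))))
    have h0 := hindep.indepFun_finset ({j}ᶜ) ({j}) hdisj hεmeas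
    have hknj : ∀ k : {k : Fin d // ¬ Relation.ReflTransGen E j k},
        k.1 ∈ ({j}ᶜ : Finset (Fin d)) := by
      intro k
      simp only [Finset.mem_compl, Finset.mem_singleton]
      intro h
      exact k.2 (by rw [h])
    set Φ : ((↑({j}ᶜ : Finset (Fin d)) : Type) → A) → (W → A) :=
      fun w l => gW l (fun k => w ⟨k.1, hknj k⟩) with hΦ
    set Ψ : ((↑({j} : Finset (Fin d)) : Type) → A) → A :=
      fun w => w ⟨j, Finset.mem_singleton_self j⟩ with hΨ
    have h1 := h0.comp (measurable_of_countable Φ) (measurable_of_countable Ψ)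
    have h2 : (Φ ∘ fun ω => fun i : (↑({j}ᶜ : Finset (Fin d)) : Type) => ε i.1 ω)
        = fun ω => fun l : W => V l.1 ω := by
      funext ω
      funext l
      exact (hgW l ω).symm
    have h3 : (Ψ ∘ fun ω => fun i : (↑({j} : Finset (Fin d)) : Type) => ε i.1 ω) = ε j := by
      funext ω; rfl
    rw [h2, h3] at h1
    exact h1
  -- structural function F with V j = F ∘ XW + ε j
  have hparW : ∀ p : {p : Fin d // E p j},
      (π.symm p.1 ≤ m ∧ p.1 ≠ j) ∧ ¬ Relation.TransGen E j p.1 := by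
    intro p
    have tg : Relation.TransGen E p.1 j := Relation.TransGen.single p.2
    refine ⟨⟨le_of_lt (lt_of_lt_of_le (hπ _ _ tg) hj), fun h => hacyc j (by rw [h] at tg; exact tg)⟩,
      fun h => hacyc j (Relation.TransGen.trans h tg)⟩
  set F : (W → A) → A := fun w => f j (fun p => w ⟨p.1, hparW p⟩) with hF
  have hVF : ∀ ω, V j ω = F (fun l : W => V l.1 ω) + ε j ω := fun ω => hV j ω
  -- Key 2 : H(V j | XW) = H(ε j)
  have hshift : entropy P (fun ω => ((fun l : W => V l.1 ω), ε j ω))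
      = entropy P (fun ω => ((fun l : W => V l.1 ω), V j ω)) := by
    refine entropy_comp_inj P _ _ (fun x : (W → A) × A => (x.1, x.2 - F x.1)) ?_ ?_
    · intro a b h
      simp only [Prod.mk.injEq] at h
      obtain ⟨h1, h2⟩ := h
      rw [h1] at h2
      exact Prod.ext h1 (sub_left_inj.mp h2)
    · intro ω
      refine Prod.ext rfl ?_
      show ε j ω = V j ω - F (fun l : W => V l.1 ω)
      rw [hVF ω]; abel
  have hkey2 : entropy P (fun ω => ((fun l : W => V l.1 ω), V j ω))
      - entropy P (fun ω => fun l : W => V l.1 ω) = entropy P (ε j) := by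
    rw [← hshift, entropy_pair_of_indepFun P _ _ hXWmeas (hεmeas j) hindepW]
    ring
  -- reindexing S' ≃ W × D
  have hDS : ∀ l : D, π.symm l.1 ≤ m ∧ l.1 ≠ j := by
    intro l
    refine ⟨l.2.1, fun h => hacyc j ?_⟩
    have h2 := l.2.2
    rw [h] at h2
    exact h2
  have hg1inj : Function.Injective (fun w : S' → A =>
      ((fun l : W => w ⟨l.1, l.2.1⟩, fun l : D => w ⟨l.1, hDS l⟩) : (W → A) × (D → A))) := by
    intro w1 w2 h
    have hW' : ∀ l : W, w1 ⟨l.1, l.2.1⟩ = w2 ⟨l.1, l.2.1⟩ :=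
      fun l => congrFun (congrArg Prod.fst h) l
    have hD' : ∀ l : D, w1 ⟨l.1, hDS l⟩ = w2 ⟨l.1, hDS l⟩ :=
      fun l => congrFun (congrArg Prod.snd h) l
    funext l
    by_cases htg : Relation.TransGen E j l.1
    · have := hD' ⟨l.1, ⟨l.2.1, htg⟩⟩
      simpa using this
    · have := hW' ⟨l.1, ⟨l.2, htg⟩⟩
      simpa using this
  have h1 : entropy P (fun ω => ((fun l : W => V l.1 ω), (fun l : D => V l.1 ω)))
      = entropy P (fun ω => fun l : S' => V l.1 ω) :=
    entropy_comp_inj P _ _ _ hg1inj (fun ω => rfl)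
  have h2 : entropy P (fun ω => (((fun l : W => V l.1 ω), (fun l : D => V l.1 ω)), V j ω))
      = entropy P (fun ω => ((fun l : S' => V l.1 ω), V j ω)) :=
    entropy_comp_inj P _ _
      (Prod.map (fun w : S' → A =>
        ((fun l : W => w ⟨l.1, l.2.1⟩, fun l : D => w ⟨l.1, hDS l⟩) : (W → A) × (D → A))) id)
      (hg1inj.prodMap Function.injective_id) (fun ω => rfl)
  constructor
  · simp only [condMutualInfo, condEntropy]
    linarith [h1, h2, hkey2]
  · intro hsink
    have hD0 : ∀ l : Fin d, π.symm l ≤ m → ¬ Relation.TransGen E j l := by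
      intro l hlm htg
      obtain ⟨k, hjk, hkl⟩ := Relation.TransGen.head'_iff.mp htg
      have hkm : π.symm k ≤ m := by
        rcases Relation.reflTransGen_iff_eq_or_transGen.mp hkl with h | h
        · exact h ▸ hlm
        · exact le_of_lt (lt_of_lt_of_le (hπ _ _ h) hlm)
      exact hsink k hkm hjk
    have h5 : entropy P (fun ω => ((fun l : W => V l.1 ω), (fun l : D => V l.1 ω)))
        = entropy P (fun ω => fun l : W => V l.1 ω) := by
      refine entropy_comp_inj P _ _
        (fun w : W → A => ((w, fun l : D => (hD0 l.1 l.2.1 l.2.2).elim) : (W → A) × (D → A)))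
        (fun a b h => congrArg Prod.fst h) ?_
      intro ω
      refine Prod.ext rfl (funext fun l => absurd l.2.2 (hD0 l.1 l.2.1))
    have h6 : entropy P (fun ω => (((fun l : W => V l.1 ω), (fun l : D => V l.1 ω)), V j ω))
        = entropy P (fun ω => ((fun l : W => V l.1 ω), V j ω)) := by
      refine entropy_comp_inj P _ _
        (fun x : (W → A) × A =>
          (((x.1, fun l : D => (hD0 l.1 l.2.1 l.2.2).elim) : (W → A) × (D → A)), x.2))
        ?_ ?_
      · intro a b h
        simp only [Prod.mk.injEq] at h
        exact Prod.ext h.1.1 h.2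
      · intro ω
        refine Prod.ext (Prod.ext rfl (funext fun l => absurd l.2.2 (hD0 l.1 l.2.1))) rfl
    simp only [condEntropy]
    linarith [h1, h2, hkey2, h5, h6]
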